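/- Let G = H ⋊ ⟨x⟩ where H = ℤ₂^d (the free ℤ₂-module of rank d, written multiplicatively), x has order 2, and x acts on H by inversion: x y x = y^{-1} for all y ∈ H. Let (G_{(n)}) denote the Zassenhaus 2-filtration of G. Then for every integer n ≥ 2, G_{(n)} = H^{2^s} where s = ⌈log₂ n⌉. -/

import Mathlib

open scoped commutatorElement

/-- Elements of the closure of the set of `k`-th powers of a subgroup `H` whose elements
pairwise commute are themselves `k`-th powers of elements of `H`. -/
lemma pow_closure_char {G : Type} [Group G] (H : Subgroup G)
    (hcomm : ∀ a ∈ H, ∀ b ∈ H, a * b = b * a) (k : ℕ) :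
    ∀ g ∈ Subgroup.closure {g : G | ∃ y ∈ H, g = y ^ k}, ∃ y ∈ H, g = y ^ k := by
  intro g hg
  let K : Subgroup G :=
    { carrier := {g : G | ∃ y ∈ H, g = y ^ k}
      one_mem' := ⟨1, H.one_mem, (one_pow _).symm⟩
      mul_mem' := by
        rintro a b ⟨y, hy, rfl⟩ ⟨z, hz, rfl⟩
        exact ⟨y * z, H.mul_mem hy hz, ((Commute.mul_pow (hcomm y hy z hz) k)).symm⟩
      inv_mem' := by
        rintro a ⟨y, hy, rfl⟩
        exact ⟨y⁻¹, H.inv_mem hy, (inv_pow y k).symm⟩ }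
  have : Subgroup.closure {g : G | ∃ y ∈ H, g = y ^ k} ≤ K :=
    (Subgroup.closure_le K).mpr (fun a ha => ha)
  exact this hg

theorem zassenhaus_of_semidirect_inversion
    {G : Type} [Group G] (d : ℕ)
    (H : Subgroup G) (x : G)
    (hx2 : x ^ 2 = 1) (hx1 : x ≠ 1) (hxH : x ∉ H)
    (hcover : ∀ g : G, g ∈ H ∨ g * x ∈ H)
    (hact : ∀ y ∈ H, x * y * x = y⁻¹)
    (e : H ≃* Multiplicative (Fin d → ℤ_[2]))
    (Z : ℕ → Subgroup G)
    (hZ1 : Z 1 = ⊤)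
    (hZrec : ∀ n : ℕ, 2 ≤ n → Z n = Subgroup.closure
      ({g : G | ∃ y ∈ Z ((n + 1) / 2), g = y ^ 2} ∪
        {g : G | ∃ i j : ℕ, 1 ≤ i ∧ 1 ≤ j ∧ i + j = n ∧
          ∃ a ∈ Z i, ∃ b ∈ Z j, g = ⁅a, b⁆})) :
    ∀ n : ℕ, 2 ≤ n →
      Z n = Subgroup.closure {g : G | ∃ y ∈ H, g = y ^ 2 ^ Nat.clog 2 n} := by
  -- commutativity of H
  have hHcomm : ∀ a ∈ H, ∀ b ∈ H, a * b = b * a := by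
    intro a ha b hb
    have h1 : (⟨a, ha⟩ : H) * ⟨b, hb⟩ = ⟨b, hb⟩ * ⟨a, ha⟩ := e.injective (by
      rw [map_mul, map_mul, mul_comm])
    exact congrArg Subtype.val h1
  have hxinv : x⁻¹ = x := by
    have : x * x = 1 := by rw [← sq]; exact hx2
    exact inv_eq_of_mul_eq_one_right this
  -- decomposition of G
  have hdec : ∀ g : G, g ∈ H ∨ ∃ z ∈ H, g = z * x := by
    intro g
    rcases hcover g with h | h
    · exact Or.inl h
    · refine Or.inr ⟨g * x, h, ?_⟩
      rw [mul_assoc, ← sq, hx2, mul_one]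
  -- conjugation by coset elements inverts H
  have hconj : ∀ h ∈ H, ∀ z ∈ H, (z * x) * h * (z * x)⁻¹ = h⁻¹ := by
    intro h hh z hz
    have : (z * x) * h * (z * x)⁻¹ = z * (x * h * x) * z⁻¹ := by
      rw [mul_inv_rev, hxinv]; group
    rw [this, hact h hh, hHcomm z hz h⁻¹ (H.inv_mem hh)]
    group
  -- commutator lemmas
  have L1 : ∀ a b : G, b ∈ H → ⁅a, b⁆ = 1 ∨ ⁅a, b⁆ = (b⁻¹) ^ 2 := by
    intro a b hb
    rcases hdec a with ha | ⟨z, hz, rfl⟩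
    · exact Or.inl (commutatorElement_eq_one_iff_commute.mpr (hHcomm a ha b hb))
    · right
      have := hconj b hb z hz
      calc ⁅z * x, b⁆ = ((z * x) * b * (z * x)⁻¹) * b⁻¹ := by
            rw [commutatorElement_def]
        _ = b⁻¹ * b⁻¹ := by rw [this]
        _ = (b⁻¹) ^ 2 := by rw [sq]
  have L2 : ∀ a b : G, a ∈ H → ⁅a, b⁆ = 1 ∨ ⁅a, b⁆ = a ^ 2 := by
    intro a b ha
    rcases hdec b with hb | ⟨w, hw, rfl⟩
    · exact Or.inl (commutatorElement_eq_one_iff_commute.mpr (hHcomm a ha b hb))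
    · right
      have h1 : (w * x) * a⁻¹ * (w * x)⁻¹ = a := by
        rw [hconj a⁻¹ (H.inv_mem ha) w hw, inv_inv]
      calc ⁅a, w * x⁆ = a * ((w * x) * a⁻¹ * (w * x)⁻¹) := by
            rw [commutatorElement_def]; group
        _ = a * a := by rw [h1]
        _ = a ^ 2 := by rw [sq]
  have hmulHx : ∀ z ∈ H, ∀ w ∈ H, (z * x) * (w * x) = z * w⁻¹ := by
    intro z hz w hw
    have : (z * x) * (w * x) = z * (x * w * x) := by group
    rw [this, hact w hw]
  have L3 : ∀ a b : G, ∃ u ∈ H, ⁅a, b⁆ = u ^ 2 := by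
    intro a b
    rcases hdec a with ha | ⟨z, hz, rfl⟩
    · rcases L2 a b ha with h | h
      · exact ⟨1, H.one_mem, by rw [h, one_pow]⟩
      · exact ⟨a, ha, h⟩
    · rcases hdec b with hb | ⟨w, hw, rfl⟩
      · rcases L1 (z * x) b hb with h | h
        · exact ⟨1, H.one_mem, by rw [h, one_pow]⟩
        · exact ⟨b⁻¹, H.inv_mem hb, h⟩
      · refine ⟨z * w⁻¹, H.mul_mem hz (H.inv_mem hw), ?_⟩
        have h1 : ⁅z * x, w * x⁆ = ((z * x) * (w * x)) * ((w * x) * (z * x))⁻¹ := by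
          rw [commutatorElement_def]; group
        rw [h1, hmulHx z hz w hw, hmulHx w hw z hz, mul_inv_rev, inv_inv, sq,
          hHcomm z hz w⁻¹ (H.inv_mem hw)]
  -- squares of arbitrary elements
  have Lsq : ∀ g : G, ∃ u ∈ H, g ^ 2 = u ^ 2 := by
    intro g
    rcases hdec g with hg | ⟨z, hz, rfl⟩
    · exact ⟨g, hg, rfl⟩
    · refine ⟨1, H.one_mem, ?_⟩
      rw [sq, hmulHx z hz z hz, mul_inv_cancel, one_pow]
  -- powers with larger exponent are powers with smaller exponent
  have hpowmem : ∀ (u v : ℕ), u ≤ v → ∀ y ∈ H, ∃ w ∈ H, y ^ 2 ^ v = w ^ 2 ^ u := by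
    intro u v huv y hy
    refine ⟨y ^ 2 ^ (v - u), H.pow_mem hy _, ?_⟩
    rw [← pow_mul, ← pow_add, Nat.sub_add_cancel huv]
  -- main induction
  intro n
  induction n using Nat.strong_induction_on with
  | _ n ih =>
    intro hn
    set s := Nat.clog 2 n with hsdef
    set m := (n + 1) / 2 with hmdef
    set r := Nat.clog 2 m with hrdef
    have hs : s = r + 1 := by
      have h21 : n + 2 - 1 = n + 1 := by omega
      rw [hsdef, Nat.clog_of_two_le one_lt_two hn, h21, hrdef, hmdef]
    -- membership of powers in Z m
    have hZm : ∀ y ∈ H, y ^ 2 ^ r ∈ Z m := by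
      intro y hy
      rcases eq_or_lt_of_le hn with h2 | h3
      · have hm1 : m = 1 := by omega
        rw [hm1, hZ1]; trivial
      · have hm2 : 2 ≤ m := by omega
        have hmn : m < n := by omega
        rw [ih m hmn hm2]
        exact Subgroup.subset_closure ⟨y, hy, rfl⟩
    rw [hZrec n hn]
    apply le_antisymm
    · rw [Subgroup.closure_le]
      rintro g (⟨y, hy, rfl⟩ | ⟨i, j, hi, hj, hij, a, ha, b, hb, rfl⟩)
      · -- squares of Z m
        rcases eq_or_lt_of_le hn with h2 | h3
        · have hm1 : m = 1 := by omega
          rcases Lsq y with ⟨u, hu, huy⟩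
          have hs1 : s = 1 := by rw [hs, hrdef, hm1, Nat.clog_one_right]
          exact Subgroup.subset_closure ⟨u, hu, by rw [huy, hs1, pow_one]⟩
        · have hm2 : 2 ≤ m := by omega
          have hmn : m < n := by omega
          rw [ih m hmn hm2] at hy
          rcases pow_closure_char H hHcomm _ y hy with ⟨w, hw, rfl⟩
          refine Subgroup.subset_closure ⟨w, hw, ?_⟩
          rw [← pow_mul, hs, pow_succ]
      · -- commutators
        rcases eq_or_lt_of_le hn with h2 | h3
        · rcases L3 a b with ⟨u, hu, huab⟩
          have hm1 : m = 1 := by omega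
          have hs1 : s = 1 := by rw [hs, hrdef, hm1, Nat.clog_one_right]
          exact Subgroup.subset_closure ⟨u, hu, by rw [huab, hs1, pow_one]⟩
        · -- n ≥ 3
          rcases eq_or_lt_of_le hi with hi1 | hi2
          · -- i = 1, j = n - 1 ≥ 2
            have hj2 : 2 ≤ j := by omega
            have hjn : j < n := by omega
            rw [ih j hjn hj2] at hb
            rcases pow_closure_char H hHcomm _ b hb with ⟨y, hy, rfl⟩
            set t := Nat.clog 2 j with htdef
            have hbH : y ^ 2 ^ t ∈ H := H.pow_mem hy _
            rcases L1 a _ hbH with h | h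
            · rw [h]; exact Subgroup.one_mem _
            · rw [h, ← inv_pow, ← pow_mul, ← pow_succ]
              have hst : s ≤ t + 1 := by
                rw [hs, htdef]
                have : r ≤ Nat.clog 2 j := Nat.clog_mono_right 2 (by omega)
                omega
              rcases hpowmem s (t + 1) hst y⁻¹ (H.inv_mem hy) with ⟨w, hw, hwy⟩
              exact Subgroup.subset_closure ⟨w, hw, hwy⟩
          · rcases eq_or_lt_of_le hj with hj1 | hj2
            · -- j = 1, i = n - 1 ≥ 2
              have hi2' : 2 ≤ i := by omega
              have hin : i < n := by omega
              rw [ih i hin hi2'] at ha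
              rcases pow_closure_char H hHcomm _ a ha with ⟨y, hy, rfl⟩
              set t := Nat.clog 2 i with htdef
              have haH : y ^ 2 ^ t ∈ H := H.pow_mem hy _
              rcases L2 _ b haH with h | h
              · rw [h]; exact Subgroup.one_mem _
              · rw [h, ← pow_mul, ← pow_succ]
                have hst : s ≤ t + 1 := by
                  rw [hs, htdef]
                  have : r ≤ Nat.clog 2 i := Nat.clog_mono_right 2 (by omega)
                  omega
                rcases hpowmem s (t + 1) hst y hy with ⟨w, hw, hwy⟩
                exact Subgroup.subset_closure ⟨w, hw, hwy⟩
            · -- i, j ≥ 2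
              have hin : i < n := by omega
              have hjn : j < n := by omega
              rw [ih i hin (by omega)] at ha
              rw [ih j hjn (by omega)] at hb
              rcases pow_closure_char H hHcomm _ a ha with ⟨y, hy, rfl⟩
              rcases pow_closure_char H hHcomm _ b hb with ⟨z, hz, rfl⟩
              have : ⁅y ^ 2 ^ Nat.clog 2 i, z ^ 2 ^ Nat.clog 2 j⁆ = 1 :=
                commutatorElement_eq_one_iff_commute.mpr
                  (hHcomm _ (H.pow_mem hy _) _ (H.pow_mem hz _))
              rw [this]; exact Subgroup.one_mem _
    · rw [Subgroup.closure_le]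
      rintro g ⟨y, hy, rfl⟩
      refine Subgroup.subset_closure (Or.inl ⟨y ^ 2 ^ r, hZm y hy, ?_⟩)
      rw [← pow_mul, hs, pow_succ]
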